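/- For g_B(z) = z + B + 1/z with |B| > 3: if |z| > 1 and Re(z/B) > 0, then for all n ≥ 1 the iterate g_B^n(z) is well-defined (never hits 0), satisfies |g_B^n(z)| > 1 and Re(g_B^n(z)/B) > 0, and moreover Re(g_B^n(z)/B) > 2n/3, so |g_B^n(z)| → ∞ as n → ∞. -/

import Mathlib

open Filter in
theorem stmt_9 (B z : ℂ) (hB : 3 < ‖B‖) (hz : 1 < ‖z‖)
    (hre : 0 < (z / B).re) :
    (∀ n : ℕ, 1 ≤ n →
        (fun w : ℂ => w + B + 1 / w)^[n] z ≠ 0 ∧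
        1 < ‖(fun w : ℂ => w + B + 1 / w)^[n] z‖ ∧
        0 < (((fun w : ℂ => w + B + 1 / w)^[n] z) / B).re ∧
        2 * n / 3 < (((fun w : ℂ => w + B + 1 / w)^[n] z) / B).re) ∧
      Tendsto (fun n : ℕ => ‖(fun w : ℂ => w + B + 1 / w)^[n] z‖)
        atTop atTop := by
  set g : ℂ → ℂ := fun w => w + B + 1 / w with hg
  have habsB : (0:ℝ) < ‖B‖ := by linarith
  have hB0 : B ≠ 0 := by
    intro h; rw [h] at hB; simp at hB; linarith
  have key : ∀ n : ℕ, 1 < ‖g^[n] z‖ ∧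
      (z / B).re + 2 * n / 3 ≤ ((g^[n] z) / B).re := by
    intro n
    induction n with
    | zero => simpa using hz
    | succ n ih =>
      obtain ⟨hw1, hwre⟩ := ih
      set w := g^[n] z with hwdef
      have hw0 : w ≠ 0 := by
        intro h; rw [h] at hw1; simp at hw1; linarith
      have hiter : g^[n+1] z = w + B + 1 / w := by
        rw [Function.iterate_succ_apply']
      have hwabs : (0:ℝ) < ‖w‖ := by linarith
      have hsplit : (w + B + 1/w) / B = w / B + 1 + 1 / (w * B) := by
        field_simp
      have habs_inv : ‖1 / (w * B)‖ < 1/3 := by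
        rw [one_div, norm_inv, norm_mul]
        rw [inv_lt_comm₀ (by positivity) (by norm_num)]
        nlinarith
      have hre_inv : -(1/3) < (1 / (w * B)).re := by
        have h1 := Complex.abs_re_le_norm (1 / (w * B))
        have h2 := neg_abs_le ((1 / (w * B)).re)
        linarith
      have hre' : (w / B).re + 2/3 < ((w + B + 1/w) / B).re := by
        rw [hsplit]
        simp only [Complex.add_re, Complex.one_re]
        linarith
      have hrepos : 0 < (w / B).re := by
        have : (0:ℝ) ≤ 2 * n / 3 := by positivity
        linarith
      have hre2 : 2/3 < ((w + B + 1/w) / B).re := by linarith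
      have habs' : 1 < ‖w + B + 1/w‖ := by
        have h1 : ((w + B + 1/w) / B).re ≤ ‖w + B + 1/w‖ / ‖B‖ := by
          rw [← norm_div]; exact Complex.re_le_norm _
        rw [le_div_iff₀ habsB] at h1
        nlinarith
      constructor
      · rw [hiter]; exact habs'
      · rw [hiter]
        push_cast
        have : (z / B).re + 2 * n / 3 + 2/3 ≤ ((w + B + 1/w) / B).re := by linarith
        linarith
  constructor
  · intro n hn
    obtain ⟨h1, h2⟩ := key n
    have hnn : (0:ℝ) ≤ 2 * n / 3 := by positivity
    refine ⟨?_, h1, by linarith, by linarith⟩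
    intro h; rw [h] at h1; simp at h1; linarith
  · have hb : ∀ n : ℕ, 2 * (n:ℝ) ≤ ‖g^[n] z‖ := by
      intro n
      obtain ⟨h1, h2⟩ := key n
      have h3 : ((g^[n] z)/B).re ≤ ‖g^[n] z‖ / ‖B‖ := by
        rw [← norm_div]; exact Complex.re_le_norm _
      rw [le_div_iff₀ habsB] at h3
      have hnn : (0:ℝ) ≤ (n:ℝ) := Nat.cast_nonneg n
      nlinarith
    refine tendsto_atTop_mono hb ?_
    exact Tendsto.const_mul_atTop (by norm_num : (0:ℝ) < 2) tendsto_natCast_atTop_atTop
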